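/- Let F = ℚ (or any field), n ≥ 3, G = GL_n(F), Z the center, B_0 the upper-triangular Borel subgroup of GL_{n−1}(F) embedded in G via h ↦ diag(h,1), U the upper-triangular unipotent subgroup of G, and for y ∈ F^{n−1} let n(y) be the unipotent matrix with upper-right column y. Identify S_n with permutation matrices in G. For w ∈ S_n let I_w⁰ = {i ∈ {1,…,n−1} : w^{−1}(i) > w^{−1}(n)}, and let Y(w) be the set of y ∈ F^{n−1} such that the support sp(y) = {i : y_i ≠ 0} is contained in I_w⁰ and w^{−1} is strictly decreasing on sp(y). Then G is the disjoint union over w ∈ S_n and y ∈ Y(w) of the double cosets Z·ι(B_0)·n(y)·w·U. -/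

import Mathlib

open scoped BigOperators
open Matrix
namespace Stmt11
open scoped Classical



variable {F : Type*} [Field F]

def PM {n : ℕ} (w : Equiv.Perm (Fin n)) : Matrix (Fin n) (Fin n) F :=
  Matrix.of fun i j => if i = w j then (1 : F) else 0

def Uni {n : ℕ} (u : Matrix (Fin n) (Fin n) F) : Prop :=
  (∀ i, u i i = 1) ∧ ∀ i j, j < i → u i j = 0

lemma PM_mul_apply {n : ℕ} (w : Equiv.Perm (Fin n)) (A : Matrix (Fin n) (Fin n) F) (i j : Fin n) :
    ((PM w : Matrix (Fin n) (Fin n) F) * A) i j = A (w.symm i) j := by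
  simp only [PM, Matrix.mul_apply, Matrix.of_apply]
  rw [Finset.sum_eq_single (w.symm i)]
  · simp
  · intro l _ hl
    rw [if_neg, zero_mul]
    intro h; exact hl (by simp [h])
  · simp

lemma mul_PM_apply {n : ℕ} (w : Equiv.Perm (Fin n)) (A : Matrix (Fin n) (Fin n) F) (i j : Fin n) :
    (A * (PM w : Matrix (Fin n) (Fin n) F)) i j = A i (w j) := by
  simp only [PM, Matrix.mul_apply, Matrix.of_apply]
  rw [Finset.sum_eq_single (w j)]
  · simp
  · intro l _ hl; rw [if_neg hl, mul_zero]
  · simp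

lemma PM_mul_PM {n : ℕ} (w w' : Equiv.Perm (Fin n)) :
    (PM w * PM w' : Matrix (Fin n) (Fin n) F) = PM (w * w') := by
  ext i j
  rw [mul_PM_apply]
  simp [PM, Equiv.symm_apply_eq]
  congr 1

lemma PM_one {n : ℕ} : (PM 1 : Matrix (Fin n) (Fin n) F) = 1 := by
  ext i j
  simp [PM, Matrix.one_apply, eq_comm]
  congr 1

lemma PM_mul_PM_symm {n : ℕ} (w : Equiv.Perm (Fin n)) :
    (PM w * PM w⁻¹ : Matrix (Fin n) (Fin n) F) = 1 := by
  rw [PM_mul_PM, mul_inv_cancel, PM_one]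

lemma uni_one {n : ℕ} : Uni (1 : Matrix (Fin n) (Fin n) F) :=
  ⟨fun i => by simp, fun i j h => by simp [Matrix.one_apply, (ne_of_lt h).symm]⟩

lemma uni_mul {n : ℕ} {u v : Matrix (Fin n) (Fin n) F} (hu : Uni u) (hv : Uni v) :
    Uni (u * v) := by
  constructor
  · intro i
    rw [Matrix.mul_apply, Finset.sum_eq_single i]
    · rw [hu.1, hv.1, one_mul]
    · intro l _ hl
      rcases lt_or_gt_of_ne hl with h | h
      · rw [hu.2 _ _ h, zero_mul]
      · rw [hv.2 _ _ h, mul_zero]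
    · simp
  · intro i j hij
    rw [Matrix.mul_apply]
    apply Finset.sum_eq_zero
    intro l _
    rcases lt_or_ge j l with h | h
    · rw [hv.2 _ _ h, mul_zero]
    · rw [hu.2 _ _ (lt_of_le_of_lt h hij), zero_mul]

lemma uni_blockTriangular {n : ℕ} {u : Matrix (Fin n) (Fin n) F} (hu : Uni u) :
    u.BlockTriangular id := fun i j h => hu.2 i j h

lemma uni_det {n : ℕ} {u : Matrix (Fin n) (Fin n) F} (hu : Uni u) : u.det = 1 := by
  rw [Matrix.det_of_upperTriangular (uni_blockTriangular hu)]
  simp [hu.1]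

lemma upper_diag_inv {n : ℕ} {t : Matrix (Fin n) (Fin n) F}
    (ht : t.BlockTriangular id) (hd : IsUnit t.det) (i : Fin n) :
    t⁻¹.BlockTriangular id ∧ t⁻¹ i i * t i i = 1 := by
  haveI := t.invertibleOfIsUnitDet hd
  have hinv : t⁻¹.BlockTriangular id := Matrix.blockTriangular_inv_of_blockTriangular ht
  refine ⟨hinv, ?_⟩
  have h1 : (t⁻¹ * t) i i = 1 := by rw [Matrix.nonsing_inv_mul t hd, Matrix.one_apply_eq]
  rw [Matrix.mul_apply] at h1
  rw [← h1]
  rw [Finset.sum_eq_single i]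
  · intro l _ hl
    rcases lt_or_gt_of_ne hl with h | h
    · rw [hinv (show id l < id i from h), zero_mul]
    · rw [ht (show id i < id l from h), mul_zero]
  · simp

lemma uni_inv {n : ℕ} {u : Matrix (Fin n) (Fin n) F} (hu : Uni u) :
    Uni u⁻¹ ∧ u * u⁻¹ = 1 := by
  have hd : IsUnit u.det := by rw [uni_det hu]; exact isUnit_one
  have h := fun i => upper_diag_inv (uni_blockTriangular hu) hd i
  refine ⟨⟨fun i => ?_, fun i j hij => (h i).1 (show id j < id i from hij)⟩, Matrix.mul_nonsing_inv u hd⟩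
  have := (h i).2
  rw [hu.1 i, mul_one] at this
  exact this


variable {F : Type*} [Field F] {k : ℕ}

def iot (b : Matrix (Fin k) (Fin k) F) : Matrix (Fin (k+1)) (Fin (k+1)) F :=
  Matrix.reindex finSumFinEquiv finSumFinEquiv
    (Matrix.fromBlocks b 0 0 (1 : Matrix (Fin 1) (Fin 1) F))

def nmat (y : Fin k → F) : Matrix (Fin (k+1)) (Fin (k+1)) F :=
  Matrix.reindex finSumFinEquiv finSumFinEquiv
    (Matrix.fromBlocks 1 (Matrix.of fun i (_ : Fin 1) => y i) 0 (1 : Matrix (Fin 1) (Fin 1) F))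

lemma reindex_mul (M N : Matrix (Fin k ⊕ Fin 1) (Fin k ⊕ Fin 1) F) :
    (Matrix.reindex finSumFinEquiv finSumFinEquiv M : Matrix (Fin (k+1)) (Fin (k+1)) F) *
      Matrix.reindex finSumFinEquiv finSumFinEquiv N =
    Matrix.reindex finSumFinEquiv finSumFinEquiv (M * N) := by
  simp only [Matrix.reindex_apply]
  exact Matrix.submatrix_mul_equiv M N _ _ _

lemma iot_mul_iot (b b' : Matrix (Fin k) (Fin k) F) : iot b * iot b' = iot (b * b') := by
  rw [iot, iot, reindex_mul, Matrix.fromBlocks_multiply]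
  simp [iot]

lemma nmat_mul_nmat (y y' : Fin k → F) : nmat y * nmat y' = nmat (y + y') := by
  rw [nmat, nmat, reindex_mul, Matrix.fromBlocks_multiply]
  congr 1
  ext i j
  rcases i with i | i <;> rcases j with j | j <;> simp [add_comm]

lemma iot_mul_nmat (b : Matrix (Fin k) (Fin k) F) (y : Fin k → F) :
    iot b * nmat y = nmat (b.mulVec y) * iot b := by
  simp only [iot, nmat]
  rw [reindex_mul, reindex_mul, Matrix.fromBlocks_multiply, Matrix.fromBlocks_multiply]
  have h1 : (b * Matrix.of fun i (_ : Fin 1) => y i) =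
      Matrix.of fun i (_ : Fin 1) => b.mulVec y i := by
    ext i j
    simp [Matrix.mul_apply, Matrix.mulVec, dotProduct]
  simp [h1]

lemma iot_one : (iot 1 : Matrix (Fin (k+1)) (Fin (k+1)) F) = 1 := by
  rw [iot, Matrix.fromBlocks_one]
  simp

lemma nmat_zero : (nmat 0 : Matrix (Fin (k+1)) (Fin (k+1)) F) = 1 := by
  rw [nmat]
  have : (Matrix.of fun i (_ : Fin 1) => (0 : Fin k → F) i) = (0 : Matrix (Fin k) (Fin 1) F) := by
    ext i j; simp
  rw [this, Matrix.fromBlocks_one]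
  simp

lemma iot_apply_cc (b : Matrix (Fin k) (Fin k) F) (i j : Fin k) :
    iot b (Fin.castSucc i) (Fin.castSucc j) = b i j := by
  simp [iot, Fin.castSucc, finSumFinEquiv_symm_apply_castAdd]

lemma iot_apply_cl (b : Matrix (Fin k) (Fin k) F) (i : Fin k) :
    iot b (Fin.castSucc i) (Fin.last k) = 0 := by
  simp [iot, Fin.castSucc, finSumFinEquiv_symm_apply_castAdd, finSumFinEquiv_symm_last]

lemma iot_apply_lc (b : Matrix (Fin k) (Fin k) F) (j : Fin k) :
    iot b (Fin.last k) (Fin.castSucc j) = 0 := by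
  simp [iot, Fin.castSucc, finSumFinEquiv_symm_apply_castAdd, finSumFinEquiv_symm_last]

lemma iot_apply_ll (b : Matrix (Fin k) (Fin k) F) :
    iot b (Fin.last k) (Fin.last k) = 1 := by
  simp [iot, finSumFinEquiv_symm_last]

lemma nmat_apply_cc (y : Fin k → F) (i j : Fin k) :
    nmat y (Fin.castSucc i) (Fin.castSucc j) = (1 : Matrix (Fin k) (Fin k) F) i j := by
  simp [nmat, Fin.castSucc, finSumFinEquiv_symm_apply_castAdd]

lemma nmat_apply_cl (y : Fin k → F) (i : Fin k) :
    nmat y (Fin.castSucc i) (Fin.last k) = y i := by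
  simp [nmat, Fin.castSucc, finSumFinEquiv_symm_apply_castAdd, finSumFinEquiv_symm_last]

lemma nmat_apply_lc (y : Fin k → F) (j : Fin k) :
    nmat y (Fin.last k) (Fin.castSucc j) = 0 := by
  simp [nmat, Fin.castSucc, finSumFinEquiv_symm_apply_castAdd, finSumFinEquiv_symm_last]

lemma nmat_apply_ll (y : Fin k → F) : nmat y (Fin.last k) (Fin.last k) = 1 := by
  simp [nmat, finSumFinEquiv_symm_last]


variable {F : Type*} [Field F] {k : ℕ}

def Emat {n : ℕ} (a b : Fin n) (c : F) : Matrix (Fin n) (Fin n) F :=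
  1 + Matrix.single a b c

lemma Emat_apply {n : ℕ} (a b : Fin n) (c : F) (i j : Fin n) :
    Emat a b c i j = (if i = j then (1 : F) else 0) + if a = i ∧ b = j then c else 0 := by
  simp [Emat, Matrix.one_apply, Matrix.single]

lemma Emat_uni {n : ℕ} {a b : Fin n} (hab : a < b) (c : F) : Uni (Emat a b c) := by
  constructor
  · intro i
    rw [Emat_apply, if_pos rfl, if_neg, add_zero]
    rintro ⟨rfl, rfl⟩
    exact lt_irrefl _ hab
  · intro i j hij
    rw [Emat_apply, if_neg (ne_of_gt hij), if_neg, add_zero]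
    rintro ⟨rfl, rfl⟩
    exact absurd (hab.trans hij) (lt_irrefl _)

lemma Emat_mul_Emat_neg {n : ℕ} {a b : Fin n} (hab : a ≠ b) (c : F) :
    Emat a b c * Emat a b (-c) = 1 := by
  rw [Emat, Emat, add_mul, mul_add, mul_add, one_mul, mul_one,
    Matrix.single_mul_single_of_ne (h := Ne.symm hab)]
  rw [one_mul, add_zero, add_assoc, ← Matrix.single_add]
  simp

lemma Emat_mul_PM {n : ℕ} (w : Equiv.Perm (Fin n)) (a b : Fin n) (c : F) :
    Emat a b c * (PM w : Matrix (Fin n) (Fin n) F) = PM w * Emat (w.symm a) (w.symm b) c := by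
  ext i j
  rw [mul_PM_apply, PM_mul_apply, Emat_apply, Emat_apply]
  congr 1
  · congr 1
    rw [eq_iff_iff, Equiv.symm_apply_eq]
  · congr 1
    rw [eq_iff_iff]
    constructor
    · rintro ⟨rfl, rfl⟩
      simp
    · rintro ⟨h1, h2⟩
      rw [Equiv.symm_apply_eq] at h2
      constructor
      · rw [← Equiv.apply_symm_apply w a, ← Equiv.apply_symm_apply w i, h1]
      · exact h2

lemma nmat_single (i : Fin k) (c : F) :
    (nmat (Pi.single i c) : Matrix (Fin (k+1)) (Fin (k+1)) F)
      = Emat (Fin.castSucc i) (Fin.last k) c := by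
  ext p q
  rw [Emat_apply]
  induction p using Fin.lastCases with
  | last =>
    induction q using Fin.lastCases with
    | last => simp [nmat_apply_ll, (Fin.castSucc_lt_last i).ne]
    | cast q =>
      rw [nmat_apply_lc]
      simp [(Fin.castSucc_lt_last q).ne', (Fin.castSucc_lt_last i).ne']
  | cast p =>
    induction q using Fin.lastCases with
    | last =>
      rw [nmat_apply_cl]
      simp only [(Fin.castSucc_lt_last p).ne, if_false, Fin.castSucc_inj, zero_add]
      rw [Pi.single_apply]
      simp [eq_comm, and_comm]
    | cast q =>
      rw [nmat_apply_cc]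
      simp [Matrix.one_apply, Fin.castSucc_inj, (Fin.castSucc_lt_last q).ne']

lemma iot_Emat (i j : Fin k) (c : F) :
    (iot (Emat i j c) : Matrix (Fin (k+1)) (Fin (k+1)) F)
      = Emat (Fin.castSucc i) (Fin.castSucc j) c := by
  ext p q
  rw [Emat_apply]
  induction p using Fin.lastCases with
  | last =>
    induction q using Fin.lastCases with
    | last => simp [iot_apply_ll, (Fin.castSucc_lt_last i).ne]
    | cast q =>
      rw [iot_apply_lc]
      simp [(Fin.castSucc_lt_last q).ne', (Fin.castSucc_lt_last i).ne]
  | cast p =>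
    induction q using Fin.lastCases with
    | last =>
      rw [iot_apply_cl]
      simp [(Fin.castSucc_lt_last p).ne, (Fin.castSucc_lt_last j).ne]
    | cast q =>
      rw [iot_apply_cc, Emat_apply]
      simp [Matrix.one_apply, Fin.castSucc_inj]



noncomputable def pivN {n : ℕ} (m : Matrix (Fin n) (Fin n) F) (j : Fin n) : ℕ :=
  (Finset.univ.filter fun i => m i j ≠ 0).sup Fin.val

lemma le_pivN {n : ℕ} {m : Matrix (Fin n) (Fin n) F} {i j : Fin n} (h : m i j ≠ 0) :
    (i : ℕ) ≤ pivN m j :=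
  Finset.le_sup (by simp [h])

lemma pivN_exists {n : ℕ} {m : Matrix (Fin n) (Fin n) F} {j : Fin n}
    (h : ∃ i, m i j ≠ 0) : ∃ i, m i j ≠ 0 ∧ (i : ℕ) = pivN m j := by
  obtain ⟨i0, hi0⟩ := h
  obtain ⟨i, hi, hs⟩ := Finset.exists_mem_eq_sup
    (Finset.univ.filter fun i => m i j ≠ 0) ⟨i0, by simp [hi0]⟩ Fin.val
  exact ⟨i, by simpa using hi, hs.symm⟩

lemma col_ne_zero {n : ℕ} {m : Matrix (Fin n) (Fin n) F} (hm : IsUnit m.det) (j : Fin n) :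
    ∃ i, m i j ≠ 0 := by
  by_contra h
  push_neg at h
  exact hm.ne_zero (Matrix.det_eq_zero_of_column_eq_zero j h)

lemma bruhat {n : ℕ} : ∀ (N : ℕ) (m : Matrix (Fin n) (Fin n) F), IsUnit m.det →
    (∑ j, pivN m j) = N →
    ∃ (t : Matrix (Fin n) (Fin n) F) (w : Equiv.Perm (Fin n)) (u : Matrix (Fin n) (Fin n) F),
      t.BlockTriangular id ∧ (∀ i, t i i ≠ 0) ∧ Uni u ∧ m = t * PM w * u := by
  intro N
  induction N using Nat.strong_induction_on with
  | _ N ih =>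
    intro m hm hN
    have hpiv : ∀ j, ∃ i, m i j ≠ 0 ∧ (i : ℕ) = pivN m j :=
      fun j => pivN_exists (col_ne_zero hm j)
    by_cases hinj : Function.Injective (pivN m)
    · choose p hp hpv using hpiv
      have hpinj : Function.Injective p := fun a b hab =>
        hinj (by rw [← hpv a, ← hpv b, hab])
      let w : Equiv.Perm (Fin n) := Equiv.ofBijective p (Finite.injective_iff_bijective.mp hpinj)
      have hw : ∀ c, w c = p c := fun c => rfl
      refine ⟨m * PM w⁻¹, w, 1, ?_, ?_, uni_one, ?_⟩
      · intro i j hij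
        rw [mul_PM_apply]
        by_contra h
        have h1 : (i : ℕ) ≤ pivN m (w⁻¹ j) := le_pivN h
        rw [← hpv (w⁻¹ j)] at h1
        have h2 : p (w⁻¹ j) = j := by
          rw [← hw]; exact w.apply_symm_apply j
        rw [h2] at h1
        exact absurd hij (not_lt.mpr (Fin.le_def.mpr h1))
      · intro i
        rw [mul_PM_apply]
        have h2 : p (w⁻¹ i) = i := by rw [← hw]; exact w.apply_symm_apply i
        have := hp (w⁻¹ i)
        rwa [h2] at this
      · rw [mul_one, Matrix.mul_assoc, PM_mul_PM]
        simp [PM_one]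
    · rw [Function.not_injective_iff] at hinj
      obtain ⟨a, b, hab, hne⟩ := hinj
      have key : ∀ j j' : Fin n, j < j' → pivN m j = pivN m j' →
          ∃ (t : Matrix (Fin n) (Fin n) F) (w : Equiv.Perm (Fin n))
            (u : Matrix (Fin n) (Fin n) F),
            t.BlockTriangular id ∧ (∀ i, t i i ≠ 0) ∧ Uni u ∧ m = t * PM w * u := by
        intro j j' hjj' hpp
        obtain ⟨i1, hi1, hv1⟩ := hpiv j
        obtain ⟨i2, hi2, hv2⟩ := hpiv j'
        have hii : i1 = i2 := Fin.ext (by rw [hv1, hv2, hpp])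
        subst hii
        set c : F := -(m i1 j') / (m i1 j) with hc
        set m' := m * Emat j j' c with hm'
        have hmem : ∀ p q, q ≠ j' → m' p q = m p q := by
          intro p q hq
          rw [hm', Emat, mul_add, mul_one, Matrix.add_apply,
            Matrix.mul_single_apply_of_ne (c := c) j j' p q hq m, add_zero]
        have hmj' : ∀ p, m' p j' = m p j' + m p j * c := by
          intro p
          rw [hm', Emat, mul_add, mul_one, Matrix.add_apply,
            Matrix.mul_single_apply_same (c := c) j j' p m]
        have hm'unit : IsUnit m'.det := by
          rw [hm', Matrix.det_mul, uni_det (Emat_uni hjj' c), mul_one]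
          exact hm
        have hlt : pivN m' j' < pivN m j' := by
          obtain ⟨q, hq, hqv⟩ := pivN_exists (col_ne_zero hm'unit j')
          rw [← hqv]
          have hqle : (q : ℕ) ≤ pivN m j' := by
            by_contra hgt
            push_neg at hgt
            have h1 : m q j' = 0 := by
              by_contra h; exact absurd (le_pivN h) (not_le.mpr hgt)
            have h2 : m q j = 0 := by
              by_contra h
              exact absurd (le_pivN h) (not_le.mpr (by rw [← hpp] at hgt; exact hgt))
            rw [hmj' q, h1, h2, zero_mul, add_zero] at hq
            exact hq rfl
          rcases lt_or_eq_of_le hqle with h | h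
          · exact h
          · exfalso
            have : q = i1 := Fin.ext (by rw [h, hv2])
            subst this
            rw [hmj' q, hc, div_eq_mul_inv, ← mul_assoc, mul_comm (m q j),
              mul_assoc, mul_inv_cancel₀ hi1, mul_one, add_neg_cancel] at hq
            exact hq rfl
        have hsum : (∑ q, pivN m' q) < N := by
          rw [← hN]
          apply Finset.sum_lt_sum (f := pivN m')
          · intro q _
            rcases eq_or_ne q j' with rfl | hq
            · exact le_of_lt hlt
            · have : ∀ p, m' p q = m p q := fun p => hmem p q hq
              have : pivN m' q = pivN m q := by
                unfold pivN
                congr 1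
                ext p
                simp [this p]
              exact le_of_eq this
          · exact ⟨j', Finset.mem_univ _, hlt⟩
        obtain ⟨t, w, u, ht, htd, hu, heq⟩ := ih _ hsum m' hm'unit rfl
        refine ⟨t, w, u * Emat j j' (-c), ht, htd, uni_mul hu (Emat_uni hjj' (-c)), ?_⟩
        have : m = m' * Emat j j' (-c) := by
          rw [hm', Matrix.mul_assoc, Emat_mul_Emat_neg (ne_of_lt hjj') c, mul_one]
        rw [this, heq, Matrix.mul_assoc, Matrix.mul_assoc]
      rcases lt_or_gt_of_ne hne with h | h
      · exact key a b h hab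
      · exact key b a h hab.symm

def Good (w : Equiv.Perm (Fin (k+1))) (y : Fin k → F) : Prop :=
  (∀ i, y i ≠ 0 → w.symm (Fin.last k) < w.symm (Fin.castSucc i)) ∧
  (∀ i j, y i ≠ 0 → y j ≠ 0 → i < j → w.symm (Fin.castSucc j) < w.symm (Fin.castSucc i))

lemma update_card {y : Fin k → F} {i : Fin k} (hi : y i ≠ 0) :
    (Finset.univ.filter fun p => Function.update y i 0 p ≠ 0).card <
      (Finset.univ.filter fun p => y p ≠ 0).card := by
  have hsub : (Finset.univ.filter fun p => Function.update y i 0 p ≠ 0) =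
      (Finset.univ.filter fun p => y p ≠ 0).erase i := by
    ext p
    rcases eq_or_ne p i with rfl | hp
    · simp [Function.update_self]
    · simp [Function.update_of_ne hp, hp]
  rw [hsub]
  exact Finset.card_erase_lt_of_mem (by simp [hi])

lemma normalize (w : Equiv.Perm (Fin (k+1))) : ∀ (N : ℕ) (y : Fin k → F),
    (Finset.univ.filter fun i => y i ≠ 0).card = N →
    ∃ (y' : Fin k → F) (b0 : Matrix (Fin k) (Fin k) F)
      (u0 : Matrix (Fin (k+1)) (Fin (k+1)) F),
      Good w y' ∧ Uni b0 ∧ Uni u0 ∧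
      (nmat y : Matrix (Fin (k+1)) (Fin (k+1)) F) * PM w = iot b0 * nmat y' * PM w * u0 := by
  intro N
  induction N using Nat.strong_induction_on with
  | _ N ih =>
    intro y hN
    by_cases hgood : Good w y
    · exact ⟨y, 1, 1, hgood, uni_one, uni_one, by rw [iot_one, one_mul, mul_one]⟩
    rw [Good, not_and_or] at hgood
    rcases hgood with hbad | hbad
    · push_neg at hbad
      obtain ⟨i, hyi, hlt⟩ := hbad
      have hne : w.symm (Fin.castSucc i) ≠ w.symm (Fin.last k) := fun h =>
        (Fin.castSucc_lt_last i).ne (w.symm.injective h)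
      have hlt' : w.symm (Fin.castSucc i) < w.symm (Fin.last k) :=
        lt_of_le_of_ne hlt hne
      set y₂ := Function.update y i 0 with hy₂
      have hsplit : y = y₂ + Pi.single i (y i) := by
        funext p
        rcases eq_or_ne p i with rfl | hp
        · simp [hy₂]
        · simp [hy₂, Function.update_of_ne hp, Pi.single_apply, hp]
      obtain ⟨y', b0, u0, hg', hb0, hu0, heq⟩ := ih _ (hN ▸ update_card hyi) y₂ rfl
      refine ⟨y', b0, u0 * Emat (w.symm (Fin.castSucc i)) (w.symm (Fin.last k)) (y i),
        hg', hb0, uni_mul hu0 (Emat_uni hlt' _), ?_⟩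
      calc (nmat y : Matrix (Fin (k+1)) (Fin (k+1)) F) * PM w
          = nmat y₂ * (Emat (Fin.castSucc i) (Fin.last k) (y i) * PM w) := by
            rw [← Matrix.mul_assoc, ← nmat_single, nmat_mul_nmat, ← hsplit]
        _ = nmat y₂ * PM w * Emat (w.symm (Fin.castSucc i)) (w.symm (Fin.last k)) (y i) := by
            rw [Emat_mul_PM, Matrix.mul_assoc]
        _ = iot b0 * nmat y' * PM w * (u0 * Emat (w.symm (Fin.castSucc i))
              (w.symm (Fin.last k)) (y i)) := by
            rw [heq]
            simp only [Matrix.mul_assoc]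
    · push_neg at hbad
      obtain ⟨i, j, hyi, hyj, hij, hlt⟩ := hbad
      have hne : w.symm (Fin.castSucc i) ≠ w.symm (Fin.castSucc j) := fun h =>
        (ne_of_lt hij) (Fin.castSucc_injective k (w.symm.injective h))
      have hlt' : w.symm (Fin.castSucc i) < w.symm (Fin.castSucc j) :=
        lt_of_le_of_ne hlt hne
      set c : F := y i / y j with hc
      set y₂ := Function.update y i 0 with hy₂
      have hmv : (Emat i j c : Matrix (Fin k) (Fin k) F).mulVec y₂ = y := by
        funext p
        rw [Emat, Matrix.add_mulVec, Matrix.single_mulVec]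
        rcases eq_or_ne p i with rfl | hp
        · simp [hy₂, hc, div_mul_cancel₀ _ hyj, Function.update_of_ne (ne_of_gt hij)]
        · simp [hy₂, Function.update_of_ne hp, Pi.add_apply, hp]
      obtain ⟨y', b0, u0, hg', hb0, hu0, heq⟩ := ih _ (hN ▸ update_card hyi) y₂ rfl
      refine ⟨y', Emat i j c * b0,
        u0 * Emat (w.symm (Fin.castSucc i)) (w.symm (Fin.castSucc j)) (-c),
        hg', uni_mul (Emat_uni hij c) hb0, uni_mul hu0 (Emat_uni hlt' _), ?_⟩
      have h1 : (nmat y : Matrix (Fin (k+1)) (Fin (k+1)) F) =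
          iot (Emat i j c) * nmat y₂ * iot (Emat i j (-c)) := by
        rw [iot_mul_nmat, hmv, Matrix.mul_assoc, iot_mul_iot,
          Emat_mul_Emat_neg (ne_of_lt hij) c, iot_one, mul_one]
      have h2 : (iot (Emat i j (-c)) : Matrix (Fin (k+1)) (Fin (k+1)) F) * PM w =
          PM w * Emat (w.symm (Fin.castSucc i)) (w.symm (Fin.castSucc j)) (-c) := by
        rw [iot_Emat, Emat_mul_PM]
      calc (nmat y : Matrix (Fin (k+1)) (Fin (k+1)) F) * PM w
          = iot (Emat i j c) * (nmat y₂ * PM w) *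
              Emat (w.symm (Fin.castSucc i)) (w.symm (Fin.castSucc j)) (-c) := by
            rw [h1]
            simp only [Matrix.mul_assoc]
            rw [h2]
        _ = iot (Emat i j c * b0) * nmat y' * PM w *
              (u0 * Emat (w.symm (Fin.castSucc i)) (w.symm (Fin.castSucc j)) (-c)) := by
            rw [heq, ← iot_mul_iot]
            simp only [Matrix.mul_assoc]

lemma iot_mul_nmat_blocks (b : Matrix (Fin k) (Fin k) F) (y : Fin k → F) :
    (iot b : Matrix (Fin (k+1)) (Fin (k+1)) F) * nmat y =
    Matrix.reindex finSumFinEquiv finSumFinEquiv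
      (Matrix.fromBlocks b (Matrix.of fun i (_ : Fin 1) => b.mulVec y i) 0
        (1 : Matrix (Fin 1) (Fin 1) F)) := by
  simp only [iot, nmat]
  rw [reindex_mul, Matrix.fromBlocks_multiply]
  have h1 : (b * Matrix.of fun i (_ : Fin 1) => y i) =
      Matrix.of fun i (_ : Fin 1) => b.mulVec y i := by
    ext i j
    simp [Matrix.mul_apply, Matrix.mulVec, dotProduct]
  simp [h1]

lemma prod_apply_cc (b : Matrix (Fin k) (Fin k) F) (y : Fin k → F) (i j : Fin k) :
    ((iot b : Matrix (Fin (k+1)) (Fin (k+1)) F) * nmat y) (Fin.castSucc i) (Fin.castSucc j)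
      = b i j := by
  rw [iot_mul_nmat_blocks]
  simp [Fin.castSucc, finSumFinEquiv_symm_apply_castAdd]

lemma prod_apply_cl (b : Matrix (Fin k) (Fin k) F) (y : Fin k → F) (i : Fin k) :
    ((iot b : Matrix (Fin (k+1)) (Fin (k+1)) F) * nmat y) (Fin.castSucc i) (Fin.last k)
      = b.mulVec y i := by
  rw [iot_mul_nmat_blocks]
  simp [Fin.castSucc, finSumFinEquiv_symm_apply_castAdd, finSumFinEquiv_symm_last]

lemma prod_apply_lc (b : Matrix (Fin k) (Fin k) F) (y : Fin k → F) (j : Fin k) :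
    ((iot b : Matrix (Fin (k+1)) (Fin (k+1)) F) * nmat y) (Fin.last k) (Fin.castSucc j)
      = 0 := by
  rw [iot_mul_nmat_blocks]
  simp [Fin.castSucc, finSumFinEquiv_symm_apply_castAdd, finSumFinEquiv_symm_last]

lemma prod_apply_ll (b : Matrix (Fin k) (Fin k) F) (y : Fin k → F) :
    ((iot b : Matrix (Fin (k+1)) (Fin (k+1)) F) * nmat y) (Fin.last k) (Fin.last k) = 1 := by
  rw [iot_mul_nmat_blocks]
  simp [finSumFinEquiv_symm_last]

lemma upper_isUnit_det {n : ℕ} {b : Matrix (Fin n) (Fin n) F}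
    (hb : ∀ i j : Fin n, j < i → b i j = 0) (hd : ∀ i, b i i ≠ 0) : IsUnit b.det := by
  rw [Matrix.det_of_upperTriangular (fun i j h => hb i j h)]
  exact (Finset.prod_ne_zero_iff.mpr fun i _ => hd i).isUnit

lemma upper_mul_apply_le {n : ℕ} {a b : Matrix (Fin n) (Fin n) F}
    (ha : ∀ i j : Fin n, j < i → a i j = 0) (hb : ∀ i j : Fin n, j < i → b i j = 0)
    (i : Fin n) : (a * b) i i = a i i * b i i := by
  rw [Matrix.mul_apply, Finset.sum_eq_single i]
  · intro l _ hl
    rcases lt_or_gt_of_ne hl with h | h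
    · rw [ha _ _ h, zero_mul]
    · rw [hb _ _ h, mul_zero]
  · simp

lemma upper_mul_upper {n : ℕ} {a b : Matrix (Fin n) (Fin n) F}
    (ha : ∀ i j : Fin n, j < i → a i j = 0) (hb : ∀ i j : Fin n, j < i → b i j = 0) :
    ∀ i j : Fin n, j < i → (a * b) i j = 0 := by
  intro i j hij
  rw [Matrix.mul_apply]
  apply Finset.sum_eq_zero
  intro l _
  rcases lt_or_ge l i with h | h
  · rw [ha _ _ h, zero_mul]
  · rw [hb _ _ (lt_of_lt_of_le hij h), mul_zero]

lemma upper_decomp {t : Matrix (Fin (k+1)) (Fin (k+1)) F}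
    (ht : t.BlockTriangular id) (htd : ∀ i, t i i ≠ 0) :
    ∃ (z : F) (b : Matrix (Fin k) (Fin k) F) (y : Fin k → F),
      z ≠ 0 ∧ (∀ i j : Fin k, j < i → b i j = 0) ∧ (∀ i, b i i ≠ 0) ∧
      t = z • ((iot b : Matrix (Fin (k+1)) (Fin (k+1)) F) * nmat y) := by
  set z : F := t (Fin.last k) (Fin.last k) with hz
  have hz0 : z ≠ 0 := htd _
  set b : Matrix (Fin k) (Fin k) F :=
    Matrix.of fun i j => z⁻¹ * t (Fin.castSucc i) (Fin.castSucc j) with hb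
  have hbu : ∀ i j : Fin k, j < i → b i j = 0 := by
    intro i j hij
    have : t (Fin.castSucc i) (Fin.castSucc j) = 0 :=
      ht (show (id (Fin.castSucc j) : Fin (k+1)) < id (Fin.castSucc i) from
        Fin.castSucc_lt_castSucc_iff.mpr hij)
    simp [hb, this]
  have hbd : ∀ i, b i i ≠ 0 := fun i =>
    mul_ne_zero (inv_ne_zero hz0) (htd (Fin.castSucc i))
  have hbdet : IsUnit b.det := upper_isUnit_det hbu hbd
  set y : Fin k → F := b⁻¹.mulVec fun i => z⁻¹ * t (Fin.castSucc i) (Fin.last k) with hy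
  have hmv : b.mulVec y = fun i => z⁻¹ * t (Fin.castSucc i) (Fin.last k) := by
    rw [hy, Matrix.mulVec_mulVec, Matrix.mul_nonsing_inv _ hbdet]
    simp
  refine ⟨z, b, y, hz0, hbu, hbd, ?_⟩
  ext p q
  rw [Matrix.smul_apply, smul_eq_mul]
  induction p using Fin.lastCases with
  | last =>
    induction q using Fin.lastCases with
    | last => rw [prod_apply_ll, mul_one]
    | cast q =>
      rw [prod_apply_lc, mul_zero]
      exact ht (show (id (Fin.castSucc q) : Fin (k+1)) < id (Fin.last k) from
        Fin.castSucc_lt_last q)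
  | cast p =>
    induction q using Fin.lastCases with
    | last =>
      rw [prod_apply_cl, hmv]
      field_simp
    | cast q =>
      rw [prod_apply_cc, hb]
      simp only [Matrix.of_apply]
      field_simp

lemma existence (g : Matrix (Fin (k+1)) (Fin (k+1)) F) (hg : IsUnit g.det) :
    ∃ (w : Equiv.Perm (Fin (k+1))) (y : Fin k → F),
      Good w y ∧ ∃ (z : F) (b : Matrix (Fin k) (Fin k) F)
        (u : Matrix (Fin (k+1)) (Fin (k+1)) F),
        z ≠ 0 ∧ (∀ i j : Fin k, j < i → b i j = 0) ∧ (∀ i, b i i ≠ 0) ∧ Uni u ∧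
        g = z • ((iot b : Matrix (Fin (k+1)) (Fin (k+1)) F) * nmat y * PM w * u) := by
  obtain ⟨t, w, u, ht, htd, hu, hgdec⟩ := bruhat _ g hg rfl
  obtain ⟨z, b, y, hz0, hbu, hbd, htdec⟩ := upper_decomp ht htd
  obtain ⟨y', b0, u0, hgood, hb0, hu0, hnorm⟩ := normalize w _ y rfl
  refine ⟨w, y', hgood, z, b * b0, u0 * u, hz0,
    upper_mul_upper hbu hb0.2, ?_, uni_mul hu0 hu, ?_⟩
  · intro i
    rw [upper_mul_apply_le hbu hb0.2, hb0.1, mul_one]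
    exact hbd i
  · rw [hgdec, htdec]
    rw [Matrix.smul_mul, Matrix.smul_mul]
    congr 1
    calc iot b * nmat y * PM w * u = iot b * (nmat y * PM w) * u := by
          simp only [Matrix.mul_assoc]
      _ = iot b * (iot b0 * nmat y' * PM w * u0) * u := by rw [hnorm]
      _ = iot (b * b0) * nmat y' * PM w * (u0 * u) := by
          rw [← iot_mul_iot]
          simp only [Matrix.mul_assoc]

lemma nmat_mul_iot_blocks (B : Matrix (Fin k) (Fin k) F) (v : Fin k → F) :
    (nmat v : Matrix (Fin (k+1)) (Fin (k+1)) F) * iot B =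
    Matrix.reindex finSumFinEquiv finSumFinEquiv
      (Matrix.fromBlocks B (Matrix.of fun i (_ : Fin 1) => v i) 0
        (1 : Matrix (Fin 1) (Fin 1) F)) := by
  simp only [iot, nmat]
  rw [reindex_mul, Matrix.fromBlocks_multiply]
  simp

lemma ni_apply_cc (B : Matrix (Fin k) (Fin k) F) (v : Fin k → F) (i j : Fin k) :
    ((nmat v : Matrix (Fin (k+1)) (Fin (k+1)) F) * iot B) (Fin.castSucc i) (Fin.castSucc j)
      = B i j := by
  rw [nmat_mul_iot_blocks]
  simp [Fin.castSucc, finSumFinEquiv_symm_apply_castAdd]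

lemma ni_apply_cl (B : Matrix (Fin k) (Fin k) F) (v : Fin k → F) (i : Fin k) :
    ((nmat v : Matrix (Fin (k+1)) (Fin (k+1)) F) * iot B) (Fin.castSucc i) (Fin.last k)
      = v i := by
  rw [nmat_mul_iot_blocks]
  simp [Fin.castSucc, finSumFinEquiv_symm_apply_castAdd, finSumFinEquiv_symm_last]

lemma ni_apply_lc (B : Matrix (Fin k) (Fin k) F) (v : Fin k → F) (j : Fin k) :
    ((nmat v : Matrix (Fin (k+1)) (Fin (k+1)) F) * iot B) (Fin.last k) (Fin.castSucc j)
      = 0 := by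
  rw [nmat_mul_iot_blocks]
  simp [Fin.castSucc, finSumFinEquiv_symm_apply_castAdd, finSumFinEquiv_symm_last]

lemma ni_apply_ll (B : Matrix (Fin k) (Fin k) F) (v : Fin k → F) :
    ((nmat v : Matrix (Fin (k+1)) (Fin (k+1)) F) * iot B) (Fin.last k) (Fin.last k)
      = 1 := by
  rw [nmat_mul_iot_blocks]
  simp [finSumFinEquiv_symm_last]

lemma uniqueness {w w' : Equiv.Perm (Fin (k+1))} {y y' : Fin k → F}
    (hgy : Good w y) (hgy' : Good w' y')
    {z z' : F} {b b' : Matrix (Fin k) (Fin k) F}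
    {u u' : Matrix (Fin (k+1)) (Fin (k+1)) F}
    (hz : z ≠ 0) (hz' : z' ≠ 0)
    (hbu : ∀ i j : Fin k, j < i → b i j = 0) (hbd : ∀ i, b i i ≠ 0)
    (hbu' : ∀ i j : Fin k, j < i → b' i j = 0) (hbd' : ∀ i, b' i i ≠ 0)
    (hu : Uni u) (hu' : Uni u')
    (heq : z • ((iot b : Matrix (Fin (k+1)) (Fin (k+1)) F) * nmat y * PM w * u)
         = z' • ((iot b' : Matrix (Fin (k+1)) (Fin (k+1)) F) * nmat y' * PM w' * u')) :
    w = w' ∧ y = y' := by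
  -- inverse of b'
  have hb'det : IsUnit b'.det := upper_isUnit_det hbu' hbd'
  have hb'inv := fun i => upper_diag_inv (fun p q h => hbu' p q h) hb'det i
  have hb'u : ∀ i j : Fin k, j < i → b'⁻¹ i j = 0 := fun i j h =>
    (hb'inv i).1 (show (id j : Fin k) < id i from h)
  set B : Matrix (Fin k) (Fin k) F := b'⁻¹ * b with hB
  have hBu : ∀ i j : Fin k, j < i → B i j = 0 := upper_mul_upper hb'u hbu
  set ζ : F := z'⁻¹ * z with hζ
  set cv : Fin k → F := -y' + B.mulVec y with hcv
  set τ : Matrix (Fin (k+1)) (Fin (k+1)) F := nmat cv * iot B with hτ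
  -- u inverse
  obtain ⟨huinv, huu⟩ := uni_inv hu
  set v : Matrix (Fin (k+1)) (Fin (k+1)) F := u' * u⁻¹ with hv
  have hvu : Uni v := uni_mul hu' huinv
  -- key equation
  have key : (ζ • τ) * PM w = PM w' * v := by
    have hA : (iot b' : Matrix (Fin (k+1)) (Fin (k+1)) F) * nmat y' * PM w' * u'
        = ζ • ((iot b : Matrix (Fin (k+1)) (Fin (k+1)) F) * nmat y * PM w * u) := by
      calc (iot b' : Matrix (Fin (k+1)) (Fin (k+1)) F) * nmat y' * PM w' * u'
          = z'⁻¹ • (z' • ((iot b' : Matrix (Fin (k+1)) (Fin (k+1)) F) * nmat y' * PM w' * u')) := by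
            rw [smul_smul, inv_mul_cancel₀ hz', one_smul]
        _ = z'⁻¹ • (z • ((iot b : Matrix (Fin (k+1)) (Fin (k+1)) F) * nmat y * PM w * u)) := by
            rw [heq]
        _ = ζ • ((iot b : Matrix (Fin (k+1)) (Fin (k+1)) F) * nmat y * PM w * u) := by
            rw [smul_smul, hζ]
    have hXA : (nmat (-y') : Matrix (Fin (k+1)) (Fin (k+1)) F) * iot b'⁻¹ *
        (iot b * nmat y * PM w * u) * u⁻¹ = τ * PM w := by
      have h1 : (iot b'⁻¹ : Matrix (Fin (k+1)) (Fin (k+1)) F) * iot b = iot B := iot_mul_iot _ _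
      calc (nmat (-y') : Matrix (Fin (k+1)) (Fin (k+1)) F) * iot b'⁻¹ *
            (iot b * nmat y * PM w * u) * u⁻¹
          = nmat (-y') * ((iot b'⁻¹ * iot b) * (nmat y * (PM w * (u * u⁻¹)))) := by
            simp only [Matrix.mul_assoc]
        _ = nmat (-y') * (iot B * (nmat y * PM w)) := by rw [h1, huu, mul_one]
        _ = nmat (-y') * ((nmat (B.mulVec y) * iot B) * PM w) := by
            rw [← Matrix.mul_assoc (iot B), iot_mul_nmat]
        _ = τ * PM w := by
            rw [hτ, hcv, ← nmat_mul_nmat]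
            simp only [Matrix.mul_assoc]
    have hXA' : (nmat (-y') : Matrix (Fin (k+1)) (Fin (k+1)) F) * iot b'⁻¹ *
        (iot b' * nmat y' * PM w' * u') * u⁻¹ = PM w' * v := by
      have h1 : (iot b'⁻¹ : Matrix (Fin (k+1)) (Fin (k+1)) F) * iot b' = 1 := by
        rw [iot_mul_iot, Matrix.nonsing_inv_mul _ hb'det, iot_one]
      calc (nmat (-y') : Matrix (Fin (k+1)) (Fin (k+1)) F) * iot b'⁻¹ *
            (iot b' * nmat y' * PM w' * u') * u⁻¹
          = nmat (-y') * ((iot b'⁻¹ * iot b') * (nmat y' * (PM w' * (u' * u⁻¹)))) := by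
            simp only [Matrix.mul_assoc]
        _ = nmat (-y') * (nmat y' * (PM w' * v)) := by rw [h1, one_mul, hv]
        _ = PM w' * v := by
            rw [← Matrix.mul_assoc, nmat_mul_nmat, neg_add_cancel, nmat_zero, one_mul]
    calc (ζ • τ) * PM w = ζ • (τ * PM w) := Matrix.smul_mul ζ τ (PM w)
      _ = ζ • ((nmat (-y') : Matrix (Fin (k+1)) (Fin (k+1)) F) * iot b'⁻¹ *
            (iot b * nmat y * PM w * u) * u⁻¹) := by rw [hXA]
      _ = (nmat (-y') : Matrix (Fin (k+1)) (Fin (k+1)) F) * iot b'⁻¹ *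
            (ζ • (iot b * nmat y * PM w * u)) * u⁻¹ := by
          rw [Matrix.mul_smul, Matrix.smul_mul]
      _ = (nmat (-y') : Matrix (Fin (k+1)) (Fin (k+1)) F) * iot b'⁻¹ *
            (iot b' * nmat y' * PM w' * u') * u⁻¹ := by rw [hA]
      _ = PM w' * v := hXA'
  -- entrywise relation
  have hrel : ∀ a c : Fin (k+1), v a c = ζ * τ (w' a) (w c) := by
    intro a c
    have h0 := congrFun (congrFun key (w' a)) c
    rw [mul_PM_apply, PM_mul_apply, Equiv.symm_apply_apply] at h0
    rw [← h0, Matrix.smul_apply, smul_eq_mul]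
  -- upper triangularity of τ
  have hτu : ∀ p q : Fin (k+1), q < p → τ p q = 0 := by
    intro p q hpq
    induction p using Fin.lastCases with
    | last =>
      induction q using Fin.lastCases with
      | last => exact absurd hpq (lt_irrefl _)
      | cast q => rw [hτ]; exact ni_apply_lc B cv q
    | cast p =>
      induction q using Fin.lastCases with
      | last => exact absurd hpq (not_lt.mpr (Fin.castSucc_lt_last p).le)
      | cast q =>
        rw [hτ, ni_apply_cc]
        exact hBu p q (Fin.castSucc_lt_castSucc_iff.mp hpq)
  -- w = w'
  have hwle : ∀ a, w' a ≤ w a := by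
    intro a
    by_contra hlt
    push_neg at hlt
    have h1 := hrel a a
    rw [hvu.1, hτu _ _ hlt, mul_zero] at h1
    exact one_ne_zero h1
  have hww : w = w' := by
    have hsum : (∑ a, ((w' a : ℕ))) = ∑ a, ((w a : ℕ)) := by
      rw [Equiv.sum_comp w' (fun p : Fin (k+1) => (p : ℕ)),
        Equiv.sum_comp w (fun p : Fin (k+1) => (p : ℕ))]
    have hall : ∀ a, w' a = w a := by
      by_contra hc
      push_neg at hc
      obtain ⟨a, ha⟩ := hc
      have hstrict : ((w' a : ℕ)) < ((w a : ℕ)) :=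
        Fin.lt_iff_val_lt_val.mp (lt_of_le_of_ne (hwle a) ha)
      have := Finset.sum_lt_sum (fun c _ => Fin.le_iff_val_le_val.mp (hwle c))
        ⟨a, Finset.mem_univ a, hstrict⟩
      exact absurd hsum (ne_of_lt this)
    exact Equiv.ext fun a => (hall a).symm
  subst hww
  refine ⟨rfl, ?_⟩
  -- diagonal of τ is ζ⁻¹ in particular ζ = 1
  have hdiag : ∀ a, ζ * τ (w a) (w a) = 1 := by
    intro a
    have h1 := hrel a a
    rw [hvu.1] at h1
    exact h1.symm
  have hζ1 : ζ = 1 := by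
    have := hdiag (w.symm (Fin.last k))
    rwa [Equiv.apply_symm_apply, hτ, ni_apply_ll, mul_one] at this
  have hBdiag : ∀ i, B i i = 1 := by
    intro i
    have := hdiag (w.symm (Fin.castSucc i))
    rwa [Equiv.apply_symm_apply, hτ, ni_apply_cc, hζ1, one_mul] at this
  -- vanishing of τ against order of w
  have hτzero : ∀ p q : Fin (k+1), w.symm q < w.symm p → τ p q = 0 := by
    intro p q hpq
    have h1 := hrel (w.symm p) (w.symm q)
    rw [hvu.2 _ _ hpq, Equiv.apply_symm_apply, Equiv.apply_symm_apply, hζ1, one_mul] at h1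
    exact h1.symm
  -- y = y'
  by_contra hne
  have hex : ∃ i, y i ≠ y' i := Function.ne_iff.mp hne
  set s : Finset (Fin k) := Finset.univ.filter fun i => y i ≠ y' i with hs
  have hsne : s.Nonempty := by
    obtain ⟨i, hi⟩ := hex
    exact ⟨i, by simp [hs, hi]⟩
  obtain ⟨i, hmem, hmax⟩ : ∃ i ∈ s, ∀ l ∈ s, l ≤ i :=
    ⟨s.max' hsne, s.max'_mem hsne, fun l hl => s.le_max' l hl⟩
  have hidiff : y i ≠ y' i := by
    rw [hs, Finset.mem_filter] at hmem
    exact hmem.2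
  have hgt : ∀ l, i < l → y l = y' l := by
    intro l hl
    by_contra hyl
    exact absurd (hmax l (by simp [hs, hyl])) (not_le.mpr hl)
  have hsum : (B.mulVec y) i = y i + ∑ l ∈ Finset.univ.erase i, B i l * y l := by
    have : (B.mulVec y) i = ∑ l, B i l * y l := by
      simp [Matrix.mulVec, dotProduct]
    rw [this, ← Finset.add_sum_erase _ _ (Finset.mem_univ i), hBdiag, one_mul]
  rcases eq_or_ne (cv i) 0 with hcvi | hcvi
  · -- cv i = 0 : there is a later index l in support
    have hS : (∑ l ∈ Finset.univ.erase i, B i l * y l) ≠ 0 := by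
      intro h0
      have h1 : -y' i + (B.mulVec y) i = 0 := by
        rw [hcv] at hcvi
        simpa using hcvi
      rw [hsum, h0, add_zero] at h1
      exact hidiff (by linear_combination h1)
    obtain ⟨l, hl, hBl⟩ := Finset.exists_ne_zero_of_sum_ne_zero hS
    have hli : l ≠ i := Finset.ne_of_mem_erase hl
    have hBil : B i l ≠ 0 := fun h => hBl (by rw [h, zero_mul])
    have hyl : y l ≠ 0 := fun h => hBl (by rw [h, mul_zero])
    have hil : i < l := by
      rcases lt_or_gt_of_ne hli with h | h
      · exact absurd (hBu i l h) hBil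
      · exact h
    have hτil : τ (Fin.castSucc i) (Fin.castSucc l) ≠ 0 := by
      rw [hτ, ni_apply_cc]; exact hBil
    have horder : w.symm (Fin.castSucc i) < w.symm (Fin.castSucc l) := by
      rcases lt_trichotomy (w.symm (Fin.castSucc i)) (w.symm (Fin.castSucc l)) with h | h | h
      · exact h
      · exact absurd (Fin.castSucc_injective k (w.symm.injective h)) hli.symm
      · exact absurd (hτzero _ _ h) hτil
    have hyl' : y' l = y l := (hgt l hil).symm
    rcases eq_or_ne (y i) 0 with hyi | hyi
    · have hy'i : y' i ≠ 0 := by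
        intro h; exact hidiff (by rw [hyi, h])
      have := hgy'.2 i l hy'i (by rw [hyl']; exact hyl) hil
      exact absurd this (not_lt.mpr horder.le)
    · have := hgy.2 i l hyi hyl hil
      exact absurd this (not_lt.mpr horder.le)
  · -- cv i ≠ 0 : contradiction with Good at i
    have hτil : τ (Fin.castSucc i) (Fin.last k) ≠ 0 := by
      rw [hτ, ni_apply_cl]
      rw [hcv] at hcvi
      exact hcvi
    have horder : ¬ (w.symm (Fin.last k) < w.symm (Fin.castSucc i)) := by
      intro h
      exact hτil (hτzero _ _ h)
    rcases eq_or_ne (y i) 0 with hyi | hyi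
    · have hy'i : y' i ≠ 0 := fun h => hidiff (by rw [hyi, h])
      exact horder (hgy'.1 i hy'i)
    · exact horder (hgy.1 i hyi)

end Stmt11

theorem stmt11 (F : Type*) [Field F] (k : ℕ) (hk : 2 ≤ k)
    (g : Matrix (Fin (k + 1)) (Fin (k + 1)) F) (hg : IsUnit g.det) :
    ∃! p : Equiv.Perm (Fin (k + 1)) × (Fin k → F),
      ((∀ i : Fin k, p.2 i ≠ 0 →
          p.1.symm (Fin.last k) < p.1.symm (Fin.castSucc i)) ∧
       (∀ i j : Fin k, p.2 i ≠ 0 → p.2 j ≠ 0 → i < j →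
          p.1.symm (Fin.castSucc j) < p.1.symm (Fin.castSucc i))) ∧
      ∃ (z : F) (b : Matrix (Fin k) (Fin k) F)
        (u : Matrix (Fin (k + 1)) (Fin (k + 1)) F),
        z ≠ 0 ∧
        (∀ i j : Fin k, j < i → b i j = 0) ∧ (∀ i : Fin k, b i i ≠ 0) ∧
        (∀ i : Fin (k + 1), u i i = 1) ∧
        (∀ i j : Fin (k + 1), j < i → u i j = 0) ∧
        g = z •
          ((Matrix.reindex finSumFinEquiv finSumFinEquiv
              (Matrix.fromBlocks b 0 0 (1 : Matrix (Fin 1) (Fin 1) F))) *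
           (Matrix.reindex finSumFinEquiv finSumFinEquiv
              (Matrix.fromBlocks 1 (Matrix.of fun i (_ : Fin 1) => p.2 i) 0
                (1 : Matrix (Fin 1) (Fin 1) F))) *
           (Matrix.of fun i j : Fin (k + 1) => if i = p.1 j then (1 : F) else 0) *
           u) := by
  obtain ⟨w, y, hgood, z, b, u, hz, hbu, hbd, hu, hdec⟩ := Stmt11.existence g hg
  refine ⟨⟨w, y⟩, ⟨⟨hgood.1, hgood.2⟩, z, b, u, hz, hbu, hbd, hu.1, hu.2, hdec⟩, ?_⟩
  rintro ⟨w', y'⟩ ⟨⟨hg1, hg2⟩, z', b', u', hz', hbu', hbd', hu1', hu2', hdec'⟩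
  have heq : z' • ((Stmt11.iot b' : Matrix (Fin (k+1)) (Fin (k+1)) F) * Stmt11.nmat y' *
      Stmt11.PM w' * u') = z • ((Stmt11.iot b : Matrix (Fin (k+1)) (Fin (k+1)) F) *
      Stmt11.nmat y * Stmt11.PM w * u) := by
    rw [← hdec]
    exact hdec'.symm
  have h := Stmt11.uniqueness ⟨hg1, hg2⟩ hgood hz' hz hbu' hbd' hbu hbd
    ⟨hu1', hu2'⟩ hu heq
  exact Prod.ext h.1 h.2
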